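/- Let 𝒞 be a pointed (i.e. admitting a zero object) finitely complete majority category. A morphism f : X → Y is central, meaning there exists φ : X × Y → Y with φ ∘ ⟨1_X, 0⟩ = f and φ ∘ ⟨0, 1_Y⟩ = 1_Y, if and only if f is the zero morphism. -/

import Mathlib

open CategoryTheory CategoryTheory.Limits

/-- The triple of morphisms `(a, b, c)` is related by the ternary relation
`(r₁, r₂, r₃)`. -/
def TernaryRelated {C : Type*} [Category C] {R A B D S : C}
    (r₁ : R ⟶ A) (r₂ : R ⟶ B) (r₃ : R ⟶ D) (a : S ⟶ A) (b : S ⟶ B) (c : S ⟶ D) : Prop :=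
  ∃ f : S ⟶ R, f ≫ r₁ = a ∧ f ≫ r₂ = b ∧ f ≫ r₃ = c

/-- A category is a majority category when every (jointly monomorphic) internal ternary
relation is strictly closed with respect to the majority matrix. -/
def IsMajorityCategory (C : Type*) [Category C] : Prop :=
  ∀ ⦃A B D R : C⦄ (r₁ : R ⟶ A) (r₂ : R ⟶ B) (r₃ : R ⟶ D),
    (∀ ⦃S : C⦄ (f g : S ⟶ R),
      f ≫ r₁ = g ≫ r₁ → f ≫ r₂ = g ≫ r₂ → f ≫ r₃ = g ≫ r₃ → f = g) →
    ∀ ⦃S : C⦄ (a₁ a₂ : S ⟶ A) (b₁ b₂ : S ⟶ B) (c₁ c₂ : S ⟶ D),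
      TernaryRelated r₁ r₂ r₃ a₁ b₁ c₂ →
      TernaryRelated r₁ r₂ r₃ a₁ b₂ c₁ →
      TernaryRelated r₁ r₂ r₃ a₂ b₁ c₁ →
      TernaryRelated r₁ r₂ r₃ a₁ b₁ c₁

/-- In a pointed finitely complete majority category, a morphism is central
if and only if it is the zero morphism. -/
theorem central_iff_zero {C : Type*} [Category C] [HasZeroObject C] [HasZeroMorphisms C]
    [HasFiniteLimits C] (hmaj : IsMajorityCategory C) {X Y : C} (f : X ⟶ Y) :
    (∃ φ : X ⨯ Y ⟶ Y, prod.lift (𝟙 X) 0 ≫ φ = f ∧ prod.lift 0 (𝟙 Y) ≫ φ = 𝟙 Y) ↔ f = 0 := by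
  constructor
  · rintro ⟨φ, h1, h2⟩
    have hmono : ∀ ⦃S : C⦄ (g h : S ⟶ X ⨯ Y),
        g ≫ (prod.fst : X ⨯ Y ⟶ X) = h ≫ prod.fst →
        g ≫ (prod.snd : X ⨯ Y ⟶ Y) = h ≫ prod.snd →
        g ≫ φ = h ≫ φ → g = h := by
      intro S g h e1 e2 _
      exact Limits.prod.hom_ext e1 e2
    have p1 : TernaryRelated (prod.fst : X ⨯ Y ⟶ X) prod.snd φ (0 : X ⟶ X) (0 : X ⟶ Y)
        (0 : X ⟶ Y) := ⟨0, by simp, by simp, by simp⟩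
    have p2 : TernaryRelated (prod.fst : X ⨯ Y ⟶ X) prod.snd φ (0 : X ⟶ X) f f :=
      ⟨f ≫ prod.lift 0 (𝟙 Y), by simp; exact prod.lift_fst _ _, by simp; exact prod.lift_snd _ _, by rw [Category.assoc, h2, Category.comp_id]⟩
    have p3 : TernaryRelated (prod.fst : X ⨯ Y ⟶ X) prod.snd φ (𝟙 X) (0 : X ⟶ Y) f :=
      ⟨prod.lift (𝟙 X) 0, prod.lift_fst _ _, prod.lift_snd _ _, h1⟩
    obtain ⟨g, hg1, hg2, hg3⟩ :=
      hmaj (prod.fst : X ⨯ Y ⟶ X) prod.snd φ hmono 0 (𝟙 X) 0 f f 0 p1 p2 p3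
    have hg : g = 0 := Limits.prod.hom_ext (by simp [hg1]) (by simp [hg2])
    rw [← hg3, hg, zero_comp]
  · rintro rfl
    exact ⟨prod.snd, prod.lift_snd _ _, prod.lift_snd _ _⟩
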